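/- Let S be a string over a nonempty finite alphabet Σ, let x be a word with occ_S(x) < |Σ|, and let u be a word such that x is a branching-σ-word of the extended string u ++ S. Then |u| ≥ |Σ|. -/

import Mathlib

/-- `occ S w`: the number of indices `i` with `0 ≤ i < |S|` such that `w` is a prefix
of the suffix of `S` starting at position `i`. -/
def occ {α : Type*} [DecidableEq α] (S w : List α) : ℕ :=
  ((Finset.range S.length).filter (fun i => w <+: S.drop i)).card

/-- `w` is a σ-word of `S` if `occ S w ≥ |Σ|`. -/
def SigmaWord {α : Type*} [DecidableEq α] [Fintype α] (S w : List α) : Prop :=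
  Fintype.card α ≤ occ S w

/-- `w` is a branching-σ-word of `S` if two distinct one-character extensions of `w`
are σ-words of `S`. -/
def BranchingSigmaWord {α : Type*} [DecidableEq α] [Fintype α] (S w : List α) : Prop :=
  ∃ a b : α, a ≠ b ∧ SigmaWord S (w ++ [a]) ∧ SigmaWord S (w ++ [b])

/-- `w` is a σ-leaf-word of `S` if it is a σ-word of `S` but no one-character
extension of `w` is a σ-word of `S`. -/
def SigmaLeafWord {α : Type*} [DecidableEq α] [Fintype α] (S w : List α) : Prop :=
  SigmaWord S w ∧ ∀ a : α, ¬ SigmaWord S (w ++ [a])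



lemma occ_two_le {α : Type*} [DecidableEq α] (S w : List α) {a b : α} (h : a ≠ b) :
    occ S (w ++ [a]) + occ S (w ++ [b]) ≤ occ S w := by
  classical
  unfold occ
  rw [← Finset.card_union_of_disjoint]
  · apply Finset.card_le_card
    intro i hi
    simp only [Finset.mem_union, Finset.mem_filter, Finset.mem_range] at *
    rcases hi with h1 | h1 <;>
      exact ⟨h1.1, ((w.prefix_append _).trans h1.2)⟩
  · rw [Finset.disjoint_filter]
    intro i _ hpa hpb
    rcases List.prefix_or_prefix_of_prefix hpa hpb with hp | hp
    · exact h (by simpa using hp.eq_of_length (by simp))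
    · exact h (by simpa using (hp.eq_of_length (by simp)).symm)

lemma occ_prepend_le {α : Type*} [DecidableEq α] (S u w : List α) :
    occ (u ++ S) w ≤ u.length + occ S w := by
  classical
  unfold occ
  have hsub : (Finset.range (u ++ S).length).filter (fun i => w <+: (u ++ S).drop i) ⊆
      Finset.range u.length ∪
      ((Finset.range S.length).filter (fun i => w <+: S.drop i)).image (· + u.length) := by
    intro i hi
    simp only [Finset.mem_filter, Finset.mem_range, List.length_append, Finset.mem_union,
      Finset.mem_image] at *
    by_cases hlt : i < u.length
    · exact Or.inl hlt
    · right
      refine ⟨i - u.length, ⟨by omega, ?_⟩, by omega⟩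
      have : (u ++ S).drop i = S.drop (i - u.length) := by
        have : i = u.length + (i - u.length) := by omega
        rw [this, List.drop_length_add_append]
        congr 1
        omega
      rw [← this]; exact hi.2
  calc _ ≤ _ := Finset.card_le_card hsub
    _ ≤ _ := Finset.card_union_le _ _
    _ ≤ u.length + occ S w := by
        simp only [Finset.card_range, occ]
        exact Nat.add_le_add_left (Finset.card_image_le) _


theorem stmt_9 {α : Type*} [DecidableEq α] [Fintype α] [Nonempty α] (S : List α)
    (x : List α) (hx : occ S x < Fintype.card α) (u : List α)
    (hbr : BranchingSigmaWord (u ++ S) x) :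
    Fintype.card α ≤ u.length := by
  obtain ⟨a, b, hab, ha, hb⟩ := hbr
  have h1 := occ_two_le (u ++ S) x hab
  have h2 := occ_prepend_le S u x
  unfold SigmaWord at ha hb
  omega
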